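/- Let T, S be standard tableaux of the same two-row shape with rows of lengths r ≥ s. If the meander M_{T,S} (superimposing the cup-diagram of T drawn above and of S drawn below the points 1,…,n) has s−1 closed loops, then the second rows of T and S share at least s−1 common entries; equivalently, all entries of the first row of T except at most one also lie in the first row of S. -/

import Mathlib

open scoped Classical

/-- The meander graph `M_{T,S}` on the points `ℕ`: edges are the cup-diagram arcs
`(cT q, bT q)` of `T` (drawn above) and `(cS q, bS q)` of `S` (drawn below). -/
def meander {s : ℕ} (cT bT cS bS : Fin s → ℕ) : SimpleGraph ℕ :=
  SimpleGraph.fromRel fun x y =>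
    (∃ q, cT q = x ∧ bT q = y) ∨ (∃ q, cS q = x ∧ bS q = y)

/-- A point is matched in a cup diagram if it is an endpoint of one of its arcs. -/
def matched {s : ℕ} (c b : Fin s → ℕ) (v : ℕ) : Prop :=
  ∃ q, c q = v ∨ b q = v

/-- `v` lies on a closed loop of the meander: every point of its connected component is
an endpoint of an arc of both cup diagrams (components of the meander are paths or
loops, and the loops are exactly the components all of whose vertices have degree 2). -/
def inLoop {s : ℕ} (cT bT cS bS : Fin s → ℕ) (v : ℕ) : Prop :=
  ∀ w, (meander cT bT cS bS).Reachable v w → matched cT bT w ∧ matched cS bS w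

/-- let `T`, `S` be standard tableaux of the same two-row shape with rows
of lengths `r ≥ s`, `n = r + s`, encoded by their rows `aT, bT` and `aS, bS`, with cup
diagrams given by the greedy matchings `cT` (arcs `(cT q, bT q)`) and `cS`.  If the
meander `M_{T,S}` has exactly `s − 1` closed loops (counted by their least points),
then the second rows of `T` and `S` share at least `s − 1` common entries. -/
theorem stmt_18 (n r s : ℕ) (hrs : s ≤ r) (hn : n = r + s)
    (aT : Fin r → ℕ) (bT : Fin s → ℕ) (aS : Fin r → ℕ) (bS : Fin s → ℕ)
    (haT : StrictMono aT) (hbT : StrictMono bT) (haS : StrictMono aS) (hbS : StrictMono bS)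
    (hdisjT : ∀ p q, aT p ≠ bT q) (hdisjS : ∀ p q, aS p ≠ bS q)
    (hunionT : ∀ k : ℕ, (1 ≤ k ∧ k ≤ n) ↔ ((∃ p, aT p = k) ∨ (∃ q, bT q = k)))
    (hunionS : ∀ k : ℕ, (1 ≤ k ∧ k ≤ n) ↔ ((∃ p, aS p = k) ∨ (∃ q, bS q = k)))
    (hcolT : ∀ q : Fin s, aT (Fin.castLE hrs q) < bT q)
    (hcolS : ∀ q : Fin s, aS (Fin.castLE hrs q) < bS q)
    (cT cS : Fin s → ℕ)
    (hcTinj : Function.Injective cT) (hcSinj : Function.Injective cS)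
    (hcT0 : ∀ h : 0 < s, cT ⟨0, h⟩ = bT ⟨0, h⟩ - 1)
    (hcS0 : ∀ h : 0 < s, cS ⟨0, h⟩ = bS ⟨0, h⟩ - 1)
    (hcTchar : ∀ q : Fin s,
      (∃ p, aT p = cT q) ∧ cT q < bT q ∧
        ∀ x : ℕ, (∃ p, aT p = x) → x < bT q →
          (∀ q' : Fin s, q' < q → cT q' ≠ x) → x ≤ cT q)
    (hcSchar : ∀ q : Fin s,
      (∃ p, aS p = cS q) ∧ cS q < bS q ∧
        ∀ x : ℕ, (∃ p, aS p = x) → x < bS q →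
          (∀ q' : Fin s, q' < q → cS q' ≠ x) → x ≤ cS q)
    (hloops :
      ((Finset.Icc 1 n).filter fun v =>
          inLoop cT bT cS bS v ∧ matched cT bT v ∧ matched cS bS v ∧
            ∀ w < v, ¬ (meander cT bT cS bS).Reachable v w).card = s - 1) :
    s - 1 ≤ ((Finset.univ.image bT) ∩ (Finset.univ.image bS)).card := by
  classical
  set G := meander cT bT cS bS with hG
  set C : ℕ → Finset ℕ := fun v => (Finset.Icc 1 n).filter fun w => G.Reachable v w with hC
  have hadjT : ∀ q : Fin s, G.Adj (cT q) (bT q) := by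
    intro q
    have hlt := (hcTchar q).2.1
    exact (SimpleGraph.fromRel_adj _ _ _).2 ⟨ne_of_lt hlt, Or.inl (Or.inl ⟨q, rfl, rfl⟩)⟩
  have hadjS : ∀ q : Fin s, G.Adj (cS q) (bS q) := by
    intro q
    have hlt := (hcSchar q).2.1
    exact (SimpleGraph.fromRel_adj _ _ _).2 ⟨ne_of_lt hlt, Or.inl (Or.inr ⟨q, rfl, rfl⟩)⟩
  have hbTmem : ∀ q : Fin s, bT q ∈ Finset.Icc 1 n := by
    intro q
    have := (hunionT (bT q)).2 (Or.inr ⟨q, rfl⟩)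
    exact Finset.mem_Icc.2 this
  have hbSmem : ∀ q : Fin s, bS q ∈ Finset.Icc 1 n := by
    intro q
    have := (hunionS (bS q)).2 (Or.inr ⟨q, rfl⟩)
    exact Finset.mem_Icc.2 this
  have hcTmem : ∀ q : Fin s, cT q ∈ Finset.Icc 1 n := by
    intro q
    obtain ⟨p, hp⟩ := (hcTchar q).1
    have := (hunionT (cT q)).2 (Or.inl ⟨p, hp⟩)
    exact Finset.mem_Icc.2 this
  set f : ℕ → ℕ := fun v => if h : (C v).Nonempty then (C v).max' h else 0 with hf
  rw [← hloops]
  apply Finset.card_le_card_of_injOn f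
  · -- maps into target
    intro v hv
    rw [Finset.mem_coe, Finset.mem_filter] at hv
    obtain ⟨hv1, hloop, hmTv, hmSv, hmin⟩ := hv
    have hvC : v ∈ C v := by
      rw [hC]; exact Finset.mem_filter.2 ⟨hv1, SimpleGraph.Reachable.refl v⟩
    have hne : (C v).Nonempty := ⟨v, hvC⟩
    have hfv : f v = (C v).max' hne := dif_pos hne
    set m := (C v).max' hne with hm
    have hmR : G.Reachable v m := (Finset.mem_filter.1 ((C v).max'_mem hne)).2
    have h_reach_mem : ∀ w, G.Reachable v w → w ∈ C v := by
      intro w hw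
      have hmw := (hloop w hw).1
      obtain ⟨q, hq⟩ := hmw
      rcases hq with hq | hq
      · rw [hC]; exact Finset.mem_filter.2 ⟨hq ▸ hcTmem q, hw⟩
      · rw [hC]; exact Finset.mem_filter.2 ⟨hq ▸ hbTmem q, hw⟩
    have h_le : ∀ w, G.Reachable v w → w ≤ m :=
      fun w hw => Finset.le_max' _ _ (h_reach_mem w hw)
    have hmbT : ∃ q, bT q = m := by
      obtain ⟨q, hq⟩ := (hloop m hmR).1
      rcases hq with hq | hq
      · exfalso
        have hreach : G.Reachable v (bT q) := hmR.trans (hq ▸ (hadjT q).reachable)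
        have := h_le _ hreach
        have hlt := (hcTchar q).2.1
        omega
      · exact ⟨q, hq⟩
    have hmbS : ∃ q, bS q = m := by
      obtain ⟨q, hq⟩ := (hloop m hmR).2
      rcases hq with hq | hq
      · exfalso
        have hreach : G.Reachable v (bS q) := hmR.trans (hq ▸ (hadjS q).reachable)
        have := h_le _ hreach
        have hlt := (hcSchar q).2.1
        omega
      · exact ⟨q, hq⟩
    rw [Finset.mem_coe, Finset.mem_inter, hfv]
    constructor
    · obtain ⟨q, hq⟩ := hmbT
      exact Finset.mem_image.2 ⟨q, Finset.mem_univ q, hq⟩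
    · obtain ⟨q, hq⟩ := hmbS
      exact Finset.mem_image.2 ⟨q, Finset.mem_univ q, hq⟩
  · -- injective on the loop set
    intro v hv v' hv' hfe
    rw [Finset.mem_coe, Finset.mem_filter] at hv hv'
    obtain ⟨hv1, _, _, _, hmin⟩ := hv
    obtain ⟨hv1', _, _, _, hmin'⟩ := hv'
    have hvC : v ∈ C v := by
      rw [hC]; exact Finset.mem_filter.2 ⟨hv1, SimpleGraph.Reachable.refl v⟩
    have hne : (C v).Nonempty := ⟨v, hvC⟩
    have hvC' : v' ∈ C v' := by
      rw [hC]; exact Finset.mem_filter.2 ⟨hv1', SimpleGraph.Reachable.refl v'⟩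
    have hne' : (C v').Nonempty := ⟨v', hvC'⟩
    have h1 : G.Reachable v (f v) := by
      rw [hf]; simp only [dif_pos hne]
      exact (Finset.mem_filter.1 ((C v).max'_mem hne)).2
    have h2 : G.Reachable v' (f v') := by
      rw [hf]; simp only [dif_pos hne']
      exact (Finset.mem_filter.1 ((C v').max'_mem hne')).2
    have hvv' : G.Reachable v v' := by
      rw [hfe] at h1
      exact h1.trans h2.symm
    rcases lt_trichotomy v v' with h | h | h
    · exact absurd hvv'.symm (hmin' v h)
    · exact h
    · exact absurd hvv' (hmin v' h)
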